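/- Let n ≥ 3, 1 ≤ p ≤ n−2 and λ ∈ ℝ. For every measurable function f : Ω_n → [0,∞], ∫_{Ω_n} f(x)·Q_{1,n−1}(x)^{λ−n/2} dx = ∫_{Ω_{n−p}} ∫_{B^p} f(ι_{n−p}^{n}(y,v))·Q_{1,n−p−1}(y)^{λ−(n−p)/2}·(1−‖v‖²)^{λ−n/2} dv dy, where dx, dy, dv denote Lebesgue measures (both sides possibly equal to +∞). -/

import Mathlib

open MeasureTheory Finset
open scoped ENNReal

noncomputable section

/-- The Lorentz quadratic form `Q_{1,m-1}(x) = x₁² - x₂² - ⋯ - x_m²`. -/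
def Qform {m : ℕ} (x : Fin m → ℝ) : ℝ :=
  ∑ i : Fin m, (if (i : ℕ) = 0 then (1 : ℝ) else -1) * x i ^ 2

/-- The Lorentz cone `Ω_m = {x : x₁ > 0, Q_{1,m-1}(x) > 0}`. -/
def coneΩ (m : ℕ) : Set (Fin m → ℝ) :=
  {x | 0 < Qform x ∧ ∀ i : Fin m, (i : ℕ) = 0 → 0 < x i}

/-- The open unit ball in `ℝ^p`. -/
def ballB (p : ℕ) : Set (Fin p → ℝ) := {v | ∑ i, v i ^ 2 < 1}

/-- The stratification map `ι_{n-p}^n(y,v) = (y, -Q_{1,n-p-1}(y)^{1/2} v)`. -/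
def iotaL (n p : ℕ) (y : Fin (n - p) → ℝ) (v : Fin p → ℝ) : Fin n → ℝ := fun j =>
  if h : (j : ℕ) < n - p then y ⟨j, h⟩
  else -Real.sqrt (Qform y) * v ⟨(j : ℕ) - (n - p), by have := j.isLt; omega⟩

lemma measurable_Qform {m : ℕ} : Measurable (Qform (m := m)) := by
  unfold Qform
  exact Finset.measurable_sum _ fun i _ =>
    measurable_const.mul ((measurable_pi_apply i).pow measurable_const)

lemma measurableSet_coneΩ (m : ℕ) : MeasurableSet (coneΩ m) := by
  have : coneΩ m = {x | 0 < Qform x} ∩ ⋂ i : Fin m, {x | (i : ℕ) = 0 → 0 < x i} := by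
    ext x; simp [coneΩ, Set.mem_iInter]
  rw [this]
  refine (measurableSet_lt measurable_const measurable_Qform).inter
    (MeasurableSet.iInter fun i => ?_)
  by_cases hi : (i : ℕ) = 0
  · have : {x : Fin m → ℝ | (i : ℕ) = 0 → 0 < x i} = {x | 0 < x i} := by ext x; simp [hi]
    rw [this]
    exact measurableSet_lt measurable_const (measurable_pi_apply i)
  · have : {x : Fin m → ℝ | (i : ℕ) = 0 → 0 < x i} = Set.univ := by ext x; simp [hi]
    rw [this]; exact MeasurableSet.univ

lemma measurableSet_sumsq_lt {p : ℕ} (c : ℝ) : MeasurableSet {z : Fin p → ℝ | ∑ i, z i ^ 2 < c} :=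
  measurableSet_lt
    (Finset.measurable_sum _ fun i _ => (measurable_pi_apply i).pow measurable_const)
    measurable_const

lemma mem_coneΩ_iff {m : ℕ} (hm : 0 < m) (x : Fin m → ℝ) :
    x ∈ coneΩ m ↔ 0 < Qform x ∧ 0 < x ⟨0, hm⟩ := by
  constructor
  · rintro ⟨h1, h2⟩; exact ⟨h1, h2 _ rfl⟩
  · rintro ⟨h1, h2⟩
    refine ⟨h1, fun i hi => ?_⟩
    have : i = ⟨0, hm⟩ := Fin.ext hi
    rwa [this]

/-- Change of variables for the stratification of the Lorentz cone. -/
theorem stmt5 (n p : ℕ) (hn : 3 ≤ n) (hp : 1 ≤ p) (hpn : p ≤ n - 2) (lam : ℝ)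
    (f : (Fin n → ℝ) → ℝ≥0∞) (hf : Measurable f) :
    ∫⁻ x in coneΩ n, f x * ENNReal.ofReal (Qform x ^ (lam - (n : ℝ) / 2)) ∂volume
      = ∫⁻ y in coneΩ (n - p), ∫⁻ v in ballB p,
          f (iotaL n p y v) *
            ENNReal.ofReal (Qform y ^ (lam - ((n : ℝ) - (p : ℝ)) / 2)) *
            ENNReal.ofReal ((1 - ∑ i, v i ^ 2) ^ (lam - (n : ℝ) / 2))
          ∂volume ∂volume := by
  have hm2 : 2 ≤ n - p := by omega
  have hmp : (n - p) + p = n := by omega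
  have h0m : 0 < n - p := by omega
  have h0n : 0 < n := by omega
  -- the identification of ℝⁿ with ℝ^{n-p} × ℝ^p
  set e : Fin (n - p) ⊕ Fin p ≃ Fin n := finSumFinEquiv.trans (finCongr hmp) with he
  set Φ : (Fin (n - p) → ℝ) × (Fin p → ℝ) → (Fin n → ℝ) :=
    fun w => fun j => Sum.elim w.1 w.2 (e.symm j) with hΦ
  have he_inl : ∀ i : Fin (n - p), ((e (Sum.inl i) : Fin n) : ℕ) = (i : ℕ) := by
    intro i; simp [he]
  have he_inr : ∀ i : Fin p, ((e (Sum.inr i) : Fin n) : ℕ) = (n - p) + (i : ℕ) := by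
    intro i; simp [he]
  have hesymm_lt : ∀ (j : Fin n) (h : (j : ℕ) < n - p), e.symm j = Sum.inl ⟨(j : ℕ), h⟩ := by
    intro j h
    rw [Equiv.symm_apply_eq]
    exact (Fin.ext (he_inl ⟨(j : ℕ), h⟩)).symm
  have hesymm_ge : ∀ (j : Fin n) (h : ¬ (j : ℕ) < n - p),
      e.symm j = Sum.inr ⟨(j : ℕ) - (n - p), by have := j.isLt; omega⟩ := by
    intro j h
    rw [Equiv.symm_apply_eq]
    refine (Fin.ext ?_).symm
    rw [he_inr]
    simp only []
    omega
  have hΦ_apply : ∀ (y : Fin (n - p) → ℝ) (z : Fin p → ℝ) (j : Fin n),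
      Φ (y, z) j = if h : (j : ℕ) < n - p then y ⟨(j : ℕ), h⟩
        else z ⟨(j : ℕ) - (n - p), by have := j.isLt; omega⟩ := by
    intro y z j
    by_cases h : (j : ℕ) < n - p
    · rw [dif_pos h]
      show Sum.elim y z (e.symm j) = _
      rw [hesymm_lt j h]
      rfl
    · rw [dif_neg h]
      show Sum.elim y z (e.symm j) = _
      rw [hesymm_ge j h]
      rfl
  have hΦmp : MeasurePreserving Φ ((volume : Measure (Fin (n-p) → ℝ)).prod volume) volume := by
    have h1 := MeasureTheory.volume_measurePreserving_sumPiEquivProdPi_symm (fun _ : Fin (n-p) ⊕ Fin p => ℝ)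
    have h2 := MeasureTheory.volume_measurePreserving_piCongrLeft (fun _ : Fin n => ℝ) e
    have hcomp := h2.comp h1
    convert hcomp using 1
    · rfl
    funext w
    funext j
    show Sum.elim w.1 w.2 (e.symm j) = _
    simp only [Function.comp]
    rw [MeasurableEquiv.piCongrLeft, MeasurableEquiv.coe_mk]
    rw [show j = e (e.symm j) from (Equiv.apply_symm_apply e j).symm]
    rw [Equiv.piCongrLeft_apply_apply]
    rw [Equiv.apply_symm_apply]
    rw [MeasurableEquiv.sumPiEquivProdPi]
    cases h : e.symm j with
    | inl a => rfl
    | inr b => rfl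
    rfl
  have hQsplit : ∀ (y : Fin (n - p) → ℝ) (z : Fin p → ℝ),
      Qform (Φ (y, z)) = Qform y - ∑ i, z i ^ 2 := by
    intro y z
    have h1 : Qform (Φ (y, z)) = ∑ i : Fin (n-p) ⊕ Fin p,
        (if ((e i : Fin n) : ℕ) = 0 then (1:ℝ) else -1) * (Φ (y, z) (e i)) ^ 2 :=
      (Equiv.sum_comp e (fun j : Fin n => (if (j : ℕ) = 0 then (1:ℝ) else -1) * (Φ (y,z) j) ^ 2)).symm
    rw [h1, Fintype.sum_sum_type]
    have hvl : ∀ i : Fin (n-p), Φ (y, z) (e (Sum.inl i)) = y i := by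
      intro i
      show Sum.elim y z (e.symm (e (Sum.inl i))) = y i
      rw [Equiv.symm_apply_apply]
      rfl
    have hvr : ∀ i : Fin p, Φ (y, z) (e (Sum.inr i)) = z i := by
      intro i
      show Sum.elim y z (e.symm (e (Sum.inr i))) = z i
      rw [Equiv.symm_apply_apply]
      rfl
    have h2 : ∀ i : Fin (n-p),
        (if ((e (Sum.inl i) : Fin n) : ℕ) = 0 then (1:ℝ) else -1) * (Φ (y, z) (e (Sum.inl i))) ^ 2
          = (if (i : ℕ) = 0 then (1:ℝ) else -1) * (y i) ^ 2 := by
      intro i; rw [hvl, he_inl]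
    have h3 : ∀ i : Fin p,
        (if ((e (Sum.inr i) : Fin n) : ℕ) = 0 then (1:ℝ) else -1) * (Φ (y, z) (e (Sum.inr i))) ^ 2
          = -(z i ^ 2) := by
      intro i
      rw [hvr, he_inr, if_neg (by omega)]
      ring
    rw [Finset.sum_congr rfl (fun i _ => h2 i), Finset.sum_congr rfl (fun i _ => h3 i)]
    rw [Finset.sum_neg_distrib]
    rw [← sub_eq_add_neg]
    rfl
  -- membership
  have hmemS : ∀ (y : Fin (n - p) → ℝ) (z : Fin p → ℝ),
      Φ (y, z) ∈ coneΩ n ↔ (y ∈ coneΩ (n - p) ∧ ∑ i, z i ^ 2 < Qform y) := by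
    intro y z
    rw [mem_coneΩ_iff h0n, mem_coneΩ_iff h0m, hQsplit]
    have hx0 : Φ (y, z) ⟨0, h0n⟩ = y ⟨0, h0m⟩ := by
      rw [hΦ_apply]
      rw [dif_pos (show ((⟨0, h0n⟩ : Fin n) : ℕ) < n - p from h0m)]
    rw [hx0]
    have hz : 0 ≤ ∑ i, z i ^ 2 := Finset.sum_nonneg fun i _ => sq_nonneg _
    constructor
    · rintro ⟨h1, h2⟩; exact ⟨⟨by linarith, h2⟩, by linarith⟩
    · rintro ⟨⟨h1, h2⟩, h3⟩; exact ⟨by linarith, h2⟩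
  -- the integrand
  set G : (Fin n → ℝ) → ℝ≥0∞ :=
    fun x => f x * ENNReal.ofReal (Qform x ^ (lam - (n : ℝ) / 2)) with hG
  have hGmeas : Measurable G :=
    hf.mul ((measurable_Qform.pow measurable_const).ennreal_ofReal)
  -- per-y change of variables
  have inner_cov : ∀ y ∈ coneΩ (n - p),
      (∫⁻ z in {z : Fin p → ℝ | ∑ i, z i ^ 2 < Qform y}, G (Φ (y, z)) ∂volume)
        = ∫⁻ v in ballB p,
            f (iotaL n p y v) *
              ENNReal.ofReal (Qform y ^ (lam - ((n : ℝ) - (p : ℝ)) / 2)) *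
              ENNReal.ofReal ((1 - ∑ i, v i ^ 2) ^ (lam - (n : ℝ) / 2)) ∂volume := by
    intro y hy
    have hQpos : 0 < Qform y := hy.1
    set c : ℝ := -Real.sqrt (Qform y) with hc
    have hcne : c ≠ 0 := by
      simp only [hc, neg_ne_zero]
      exact (Real.sqrt_pos.mpr hQpos).ne'
    have hc2 : c ^ 2 = Qform y := by
      rw [hc, neg_pow]
      simp [Real.sq_sqrt hQpos.le]
    have hiota : ∀ v : Fin p → ℝ, Φ (y, c • v) = iotaL n p y v := by
      intro v
      funext j
      rw [hΦ_apply]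
      unfold iotaL
      by_cases h : (j : ℕ) < n - p
      · rw [dif_pos h, dif_pos h]
      · rw [dif_neg h, dif_neg h]
        simp [hc, Pi.smul_apply, smul_eq_mul]
    have hscaleQ : ∀ v : Fin p → ℝ, ∑ i, (c • v) i ^ 2 = Qform y * ∑ i, v i ^ 2 := by
      intro v
      rw [Finset.mul_sum]
      refine Finset.sum_congr rfl fun i _ => ?_
      simp only [Pi.smul_apply, smul_eq_mul, mul_pow]
      rw [hc2]
    set T : Set (Fin p → ℝ) := {z | ∑ i, z i ^ 2 < Qform y} with hT
    set J : (Fin p → ℝ) → ℝ≥0∞ := fun z => T.indicator (fun z => G (Φ (y, z))) z with hJ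
    have hJmeas : Measurable J :=
      (hGmeas.comp (hΦmp.measurable.comp measurable_prodMk_left)).indicator
        (measurableSet_sumsq_lt _)
    have hfinrank : Module.finrank ℝ (Fin p → ℝ) = p := by
      rw [Module.finrank_fintype_fun_eq_card, Fintype.card_fin]
    have hmap : ∫⁻ v, J (c • v) ∂volume = ENNReal.ofReal |(c ^ p)⁻¹| * ∫⁻ z, J z ∂volume := by
      have h1 := MeasureTheory.Measure.map_addHaar_smul (volume : Measure (Fin p → ℝ)) hcne
      rw [hfinrank] at h1
      calc ∫⁻ v, J (c • v) ∂volume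
          = ∫⁻ x, J x ∂(Measure.map (c • ·) volume) :=
            (lintegral_map hJmeas (measurable_const_smul c)).symm
        _ = ENNReal.ofReal |(c ^ p)⁻¹| * ∫⁻ z, J z ∂volume := by
            rw [h1, lintegral_smul_measure, smul_eq_mul]
    have hcancel : ∫⁻ z, J z ∂volume = ENNReal.ofReal |c ^ p| * ∫⁻ v, J (c • v) ∂volume := by
      rw [hmap, ← mul_assoc, ← ENNReal.ofReal_mul (abs_nonneg _), ← abs_mul,
        mul_inv_cancel₀ (pow_ne_zero _ hcne), abs_one, ENNReal.ofReal_one, one_mul]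
    have hJc : ∀ v : Fin p → ℝ,
        J (c • v) = (ballB p).indicator (fun v => G (Φ (y, c • v))) v := by
      intro v
      by_cases hv : v ∈ ballB p
      · rw [Set.indicator_of_mem hv]
        refine Set.indicator_of_mem ?_ _
        show ∑ i, (c • v) i ^ 2 < Qform y
        rw [hscaleQ]
        calc Qform y * ∑ i, v i ^ 2 < Qform y * 1 := by
              exact mul_lt_mul_of_pos_left hv hQpos
          _ = Qform y := mul_one _
      · rw [Set.indicator_of_notMem hv]
        refine Set.indicator_of_notMem ?_ _
        intro hmem
        apply hv
        have : ∑ i, (c • v) i ^ 2 < Qform y := hmem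
        rw [hscaleQ] at this
        have h2 : Qform y * ∑ i, v i ^ 2 < Qform y * 1 := by rwa [mul_one]
        exact (mul_lt_mul_iff_right₀ hQpos).mp h2
    -- |c^p| = Qform y ^ (p/2)
    have habs : |c ^ p| = Qform y ^ ((p : ℝ) / 2) := by
      rw [abs_pow, hc, abs_neg, abs_of_nonneg (Real.sqrt_nonneg _)]
      rw [Real.sqrt_eq_rpow]
      rw [← Real.rpow_natCast (Qform y ^ ((1:ℝ)/2)) p, ← Real.rpow_mul hQpos.le]
      congr 1
      ring
    calc ∫⁻ z in T, G (Φ (y, z)) ∂volume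
        = ∫⁻ z, J z ∂volume := (lintegral_indicator (measurableSet_sumsq_lt _) _).symm
      _ = ENNReal.ofReal |c ^ p| * ∫⁻ v, J (c • v) ∂volume := hcancel
      _ = ENNReal.ofReal |c ^ p| * ∫⁻ v in ballB p, G (Φ (y, c • v)) ∂volume := by
          have hball : MeasurableSet (ballB p) := measurableSet_lt
            (Finset.measurable_sum _ fun i _ => (measurable_pi_apply i).pow measurable_const)
            measurable_const
          rw [lintegral_congr hJc, lintegral_indicator hball]
      _ = ∫⁻ v in ballB p, ENNReal.ofReal |c ^ p| * G (Φ (y, c • v)) ∂volume := by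
          rw [lintegral_const_mul' _ _ ENNReal.ofReal_ne_top]
      _ = ∫⁻ v in ballB p,
            f (iotaL n p y v) *
              ENNReal.ofReal (Qform y ^ (lam - ((n : ℝ) - (p : ℝ)) / 2)) *
              ENNReal.ofReal ((1 - ∑ i, v i ^ 2) ^ (lam - (n : ℝ) / 2)) ∂volume := by
          refine setLIntegral_congr_fun (measurableSet_sumsq_lt _) ?_
          intro v hv
          have hv1 : ∑ i, v i ^ 2 < 1 := hv
          have h1s : 0 ≤ 1 - ∑ i, v i ^ 2 := by linarith
          have hQv : Qform (Φ (y, c • v)) = Qform y * (1 - ∑ i, v i ^ 2) := by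
            rw [hQsplit, hscaleQ]
            ring
          rw [hG]
          simp only []
          rw [hQv, hiota, habs]
          rw [Real.mul_rpow hQpos.le h1s]
          rw [ENNReal.ofReal_mul (Real.rpow_nonneg hQpos.le _)]
          rw [show (lam - ((n : ℝ) - (p : ℝ)) / 2) = (p : ℝ) / 2 + (lam - (n : ℝ) / 2) by ring]
          rw [Real.rpow_add hQpos]
          rw [ENNReal.ofReal_mul (Real.rpow_nonneg hQpos.le _)]
          ring
  -- main computation
  have hindmeas : Measurable fun w : (Fin (n-p) → ℝ) × (Fin p → ℝ) =>
      (coneΩ n).indicator G (Φ w) :=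
    (hGmeas.indicator (measurableSet_coneΩ n)).comp hΦmp.measurable
  calc ∫⁻ x in coneΩ n, G x ∂volume
      = ∫⁻ x, (coneΩ n).indicator G x ∂volume :=
        (lintegral_indicator (measurableSet_coneΩ n) G).symm
    _ = ∫⁻ w, (coneΩ n).indicator G (Φ w)
          ∂((volume : Measure (Fin (n-p) → ℝ)).prod volume) :=
        (hΦmp.lintegral_comp (hGmeas.indicator (measurableSet_coneΩ n))).symm
    _ = ∫⁻ y, ∫⁻ z, (coneΩ n).indicator G (Φ (y, z)) ∂volume ∂volume :=
        lintegral_prod _ hindmeas.aemeasurable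
    _ = ∫⁻ y, (coneΩ (n - p)).indicator
          (fun y' => ∫⁻ z in {z : Fin p → ℝ | ∑ i, z i ^ 2 < Qform y'}, G (Φ (y', z)) ∂volume)
          y ∂volume := by
        refine lintegral_congr fun y => ?_
        by_cases hy : y ∈ coneΩ (n - p)
        · rw [Set.indicator_of_mem hy]
          rw [← lintegral_indicator (measurableSet_sumsq_lt _)]
          refine lintegral_congr fun z => ?_
          by_cases hz : ∑ i, z i ^ 2 < Qform y
          · rw [Set.indicator_of_mem (show z ∈ {z : Fin p → ℝ | ∑ i, z i ^ 2 < Qform y} from hz),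
              Set.indicator_of_mem ((hmemS y z).mpr ⟨hy, hz⟩)]
          · rw [Set.indicator_of_notMem (show z ∉ {z : Fin p → ℝ | ∑ i, z i ^ 2 < Qform y} from hz),
              Set.indicator_of_notMem (fun hmem => hz ((hmemS y z).mp hmem).2)]
        · rw [Set.indicator_of_notMem hy]
          have : ∀ z : Fin p → ℝ, (coneΩ n).indicator G (Φ (y, z)) = 0 := by
            intro z
            exact Set.indicator_of_notMem (fun hmem => hy ((hmemS y z).mp hmem).1) _
          simp only [this, lintegral_zero]
    _ = ∫⁻ y in coneΩ (n - p),
          ∫⁻ z in {z : Fin p → ℝ | ∑ i, z i ^ 2 < Qform y}, G (Φ (y, z)) ∂volume ∂volume :=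
        lintegral_indicator (measurableSet_coneΩ _) _
    _ = ∫⁻ y in coneΩ (n - p), ∫⁻ v in ballB p,
          f (iotaL n p y v) *
            ENNReal.ofReal (Qform y ^ (lam - ((n : ℝ) - (p : ℝ)) / 2)) *
            ENNReal.ofReal ((1 - ∑ i, v i ^ 2) ^ (lam - (n : ℝ) / 2)) ∂volume ∂volume :=
        setLIntegral_congr_fun (measurableSet_coneΩ _) inner_cov
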